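/- Let α, β : Fin 2 → ℂ with α 0 · β 1 − α 1 · β 0 = 1, let ψ ∈ ℂ with ψ ≠ 0, define υ A B := (α A · β B + α B · β A)/2, h A B C D := −(ε A C · ε D B + ε A D · ε C B)/2, and the type-D Weyl spinor Ψ A B C D := ψ·(υ A B · υ C D + (1/6)·h A B C D). For a symmetric 2-index spinor ζ set Ξ := ψ⁻¹·Σ_{A,B,C,D} Ψ A B C D · ζ♯ A B · ζ♯ C D − (1/6)·⟨ζ, ζ⟩. Then (i) Ξ = ⟨υ, ζ⟩², and (ii) if ⟨υ, ζ⟩ ≠ 0 (equivalently Ξ ≠ 0), then for all A, B: ψ⁻¹·Σ_{C,D} Ψ A B C D · ζ♯ C D − (1/6)·ζ A B = ⟨υ, ζ⟩ · υ A B. In particular, the spinor ψ⁻¹·Ψ·ζ − (1/6)·ζ divided by either square root of Ξ equals ±υ, independently of the choice of ζ. -/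

import Mathlib

set_option maxHeartbeats 2000000


/-- The spinor `ε`: `ε 0 0 = ε 1 1 = 0`, `ε 0 1 = 1`, `ε 1 0 = −1`. -/
def eps (A B : Fin 2) : ℂ := if A = B then 0 else if A = 0 then 1 else -1

/-- The raised version `ζ♯ C D = Σ_{P,Q} ε C P · ε D Q · ζ P Q` of a 2-index spinor. -/
noncomputable def raise (ζ : Fin 2 → Fin 2 → ℂ) (C D : Fin 2) : ℂ :=
  ∑ P, ∑ Q, eps C P * eps D Q * ζ P Q

/-- The `ε`-contraction `⟨σ, ζ⟩ = Σ_{A,B} σ A B · ζ♯ A B` of 2-index spinors. -/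
noncomputable def contr (σ ζ : Fin 2 → Fin 2 → ℂ) : ℂ := ∑ A, ∑ B, σ A B * raise ζ A B

/-- The spinor `h A B C D = −(ε A C · ε D B + ε A D · ε C B)/2`. -/
noncomputable def hspin (A B C D : Fin 2) : ℂ :=
  -(eps A C * eps D B + eps A D * eps C B) / 2

/-- The symmetrized dyad product `υ A B = (α A · β B + α B · β A)/2`. -/
noncomputable def ups (α β : Fin 2 → ℂ) (A B : Fin 2) : ℂ := (α A * β B + α B * β A) / 2

/-- The type D Weyl spinor `Ψ A B C D = ψ·(υ A B · υ C D + (1/6)·h A B C D)`. -/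
noncomputable def weylD (α β : Fin 2 → ℂ) (ψ : ℂ) (A B C D : Fin 2) : ℂ :=
  ψ * (ups α β A B * ups α β C D + (1 / 6) * hspin A B C D)

/-- For a type D Weyl spinor with `ψ ≠ 0` and a symmetric spinor `ζ`, setting
`Ξ := ψ⁻¹·Σ Ψ·ζ♯·ζ♯ − (1/6)·⟨ζ, ζ⟩` one has (i) `Ξ = ⟨υ, ζ⟩²`; (ii) if `⟨υ, ζ⟩ ≠ 0`
(equivalently `Ξ ≠ 0`) then `ψ⁻¹·Σ Ψ A B C D·ζ♯ C D − (1/6)·ζ A B = ⟨υ, ζ⟩·υ A B`;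
in particular the left-hand side of (ii) divided by either square root of `Ξ` equals
`±υ`, independently of the choice of `ζ`. -/

private lemma key_eq (α β : Fin 2 → ℂ) (ψ : ℂ) (hψ : ψ ≠ 0)
    (ζ : Fin 2 → Fin 2 → ℂ) (hsym : ζ 1 0 = ζ 0 1) (A B : Fin 2) :
    ψ⁻¹ * (∑ C, ∑ D, weylD α β ψ A B C D * raise ζ C D) - (1 / 6) * ζ A B
      = contr (ups α β) ζ * ups α β A B := by
  fin_cases A <;> fin_cases B <;>
    simp only [weylD, ups, hspin, eps, raise, contr, Fin.sum_univ_two, Fin.isValue,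
      hsym, if_true, if_false, reduceIte, Fin.zero_eta, Fin.mk_one, Fin.reduceEq, ↓reduceIte] <;>
    field_simp <;> ring

private lemma key_Xi (α β : Fin 2 → ℂ) (ψ : ℂ) (hψ : ψ ≠ 0)
    (ζ : Fin 2 → Fin 2 → ℂ) (hsym : ζ 1 0 = ζ 0 1) :
    ψ⁻¹ * (∑ A, ∑ B, ∑ C, ∑ D, weylD α β ψ A B C D * raise ζ A B * raise ζ C D)
        - (1 / 6) * contr ζ ζ = (contr (ups α β) ζ) ^ 2 := by
  simp only [weylD, ups, hspin, eps, raise, contr, Fin.sum_univ_two, Fin.isValue,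
    hsym, if_true, if_false, reduceIte, Fin.zero_eta, Fin.mk_one, Fin.reduceEq, ↓reduceIte]
  field_simp
  ring

theorem weylD_killing_spinor_candidate (α β : Fin 2 → ℂ)
    (hdyad : α 0 * β 1 - α 1 * β 0 = 1) (ψ : ℂ) (hψ : ψ ≠ 0)
    (ζ : Fin 2 → Fin 2 → ℂ) (hsym : ∀ A B, ζ A B = ζ B A) :
    (ψ⁻¹ * (∑ A, ∑ B, ∑ C, ∑ D, weylD α β ψ A B C D * raise ζ A B * raise ζ C D)
        - (1 / 6) * contr ζ ζ = (contr (ups α β) ζ) ^ 2)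
    ∧ ((contr (ups α β) ζ ≠ 0 ↔
          ψ⁻¹ * (∑ A, ∑ B, ∑ C, ∑ D, weylD α β ψ A B C D * raise ζ A B * raise ζ C D)
            - (1 / 6) * contr ζ ζ ≠ 0)
        ∧ (contr (ups α β) ζ ≠ 0 → ∀ A B : Fin 2,
          ψ⁻¹ * (∑ C, ∑ D, weylD α β ψ A B C D * raise ζ C D) - (1 / 6) * ζ A B
            = contr (ups α β) ζ * ups α β A B))
    ∧ (∀ c : ℂ, c ≠ 0 →
        c ^ 2 = ψ⁻¹ * (∑ A, ∑ B, ∑ C, ∑ D, weylD α β ψ A B C D * raise ζ A B * raise ζ C D)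
            - (1 / 6) * contr ζ ζ →
        (∀ A B : Fin 2,
            (ψ⁻¹ * (∑ C, ∑ D, weylD α β ψ A B C D * raise ζ C D) - (1 / 6) * ζ A B) / c
              = ups α β A B)
        ∨ (∀ A B : Fin 2,
            (ψ⁻¹ * (∑ C, ∑ D, weylD α β ψ A B C D * raise ζ C D) - (1 / 6) * ζ A B) / c
              = -ups α β A B)) := by
  have hs : ζ 1 0 = ζ 0 1 := hsym 1 0
  have hXi := key_Xi α β ψ hψ ζ hs
  have hkey := key_eq α β ψ hψ ζ hs
  refine ⟨hXi, ⟨?_, fun h A B => hkey A B⟩, ?_⟩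
  · rw [hXi]
    constructor
    · exact fun h => pow_ne_zero 2 h
    · intro h hc; exact h (by rw [hc]; ring)
  · intro c hc hc2
    rw [hXi] at hc2
    have hcases : c = contr (ups α β) ζ ∨ c = -(contr (ups α β) ζ) := by
      have : (c - contr (ups α β) ζ) * (c + contr (ups α β) ζ) = 0 := by
        linear_combination hc2
      rcases mul_eq_zero.mp this with h | h
      · left; linear_combination h
      · right; linear_combination h
    rcases hcases with h | h
    · left; intro A B
      have hne : contr (ups α β) ζ ≠ 0 := by rw [h] at hc; exact hc
      rw [hkey A B, h, mul_comm, mul_div_assoc, div_self hne, mul_one]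
    · right; intro A B
      have hne : contr (ups α β) ζ ≠ 0 := by
        intro h0; exact hc (by rw [h, h0, neg_zero])
      rw [hkey A B, h, div_neg, mul_comm, mul_div_assoc, div_self hne, mul_one]
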